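/- Let γ ≥ 0, λ ∈ ℝ, and let C₀ ∈ ℝ. Define d₁(θ) = C₀(γ cos θ + sin θ) and α = λ(θ + ω₂). Then the function a₁(θ) = (λC₀(1+γ²)^{3/2}/8) · [ (2 - sin 3ω / sin ω) cos((λ-1)(θ+ω₂)) + 2cos((λ+1)(θ+ω₂)) - cos((λ+3)(θ+ω₂)) ] solves the ODE a₁''(θ) + (λ-1)² a₁(θ) = C₀(1+γ²)^{3/2} [ λ(λ+1) cos((λ+3)(θ+ω₂)) - λ² cos((λ+1)(θ+ω₂)) ] with boundary conditions a₁'(-ω₂) = 0 and a₁(ω₁) = 0, where ω = ω₁ + ω₂ and λ = -π/(2ω). -/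

import Mathlib

open Real

lemma hasDerivAt_cos_lin (c b θ : ℝ) :
    HasDerivAt (fun x => Real.cos (c * (x + b))) (-(c * Real.sin (c * (θ + b)))) θ := by
  have h : HasDerivAt (fun x : ℝ => c * (x + b)) c θ := by
    simpa using ((hasDerivAt_id θ).add_const b).const_mul c
  simpa [mul_comm, Function.comp_def] using (Real.hasDerivAt_cos (c * (θ + b))).comp θ h

lemma hasDerivAt_sin_lin (c b θ : ℝ) :
    HasDerivAt (fun x => Real.sin (c * (x + b))) (c * Real.cos (c * (θ + b))) θ := by
  have h : HasDerivAt (fun x : ℝ => c * (x + b)) c θ := by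
    simpa using ((hasDerivAt_id θ).add_const b).const_mul c
  simpa [mul_comm, Function.comp_def] using (Real.hasDerivAt_sin (c * (θ + b))).comp θ h

theorem statement13 (γ lam C₀ ω ω₁ ω₂ : ℝ) (hγ : 0 ≤ γ) (hω : ω = ω₁ + ω₂)
    (hωpos : 0 < ω) (hωlt : ω < π / 2) (hlam : lam = -π / (2 * ω))
    (a₁ : ℝ → ℝ)
    (ha₁ : a₁ = fun θ => (lam * C₀ * (1 + γ ^ 2) ^ ((3 : ℝ) / 2) / 8) *
      ((2 - Real.sin (3 * ω) / Real.sin ω) * Real.cos ((lam - 1) * (θ + ω₂)) +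
        2 * Real.cos ((lam + 1) * (θ + ω₂)) - Real.cos ((lam + 3) * (θ + ω₂)))) :
    (∀ θ : ℝ, deriv (deriv a₁) θ + (lam - 1) ^ 2 * a₁ θ =
      C₀ * (1 + γ ^ 2) ^ ((3 : ℝ) / 2) *
        (lam * (lam + 1) * Real.cos ((lam + 3) * (θ + ω₂)) -
          lam ^ 2 * Real.cos ((lam + 1) * (θ + ω₂)))) ∧
    deriv a₁ (-ω₂) = 0 ∧ a₁ ω₁ = 0 := by
  have hωne : ω ≠ 0 := ne_of_gt hωpos
  have hsinω : Real.sin ω ≠ 0 :=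
    ne_of_gt (Real.sin_pos_of_pos_of_lt_pi hωpos (lt_trans hωlt (by linarith [Real.pi_pos])))
  set K := lam * C₀ * (1 + γ ^ 2) ^ ((3 : ℝ) / 2) / 8 with hK
  set A := 2 - Real.sin (3 * ω) / Real.sin ω with hA
  set g : ℝ → ℝ := fun θ => K * (A * (-((lam - 1) * Real.sin ((lam - 1) * (θ + ω₂)))) +
      2 * (-((lam + 1) * Real.sin ((lam + 1) * (θ + ω₂)))) -
      (-((lam + 3) * Real.sin ((lam + 3) * (θ + ω₂))))) with hg
  have hD : ∀ θ, HasDerivAt a₁ (g θ) θ := by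
    intro θ
    rw [ha₁]
    exact ((((hasDerivAt_cos_lin (lam - 1) ω₂ θ).const_mul A).add
      ((hasDerivAt_cos_lin (lam + 1) ω₂ θ).const_mul 2)).sub
      (hasDerivAt_cos_lin (lam + 3) ω₂ θ)).const_mul K
  have hderiv : deriv a₁ = g := funext fun θ => (hD θ).deriv
  have hD2 : ∀ θ, HasDerivAt g
      (K * (A * (-((lam - 1) * ((lam - 1) * Real.cos ((lam - 1) * (θ + ω₂))))) +
        2 * (-((lam + 1) * ((lam + 1) * Real.cos ((lam + 1) * (θ + ω₂))))) -
        (-((lam + 3) * ((lam + 3) * Real.cos ((lam + 3) * (θ + ω₂))))))) θ := by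
    intro θ
    exact (((((hasDerivAt_sin_lin (lam - 1) ω₂ θ).const_mul (lam - 1)).neg.const_mul A).add
      (((hasDerivAt_sin_lin (lam + 1) ω₂ θ).const_mul (lam + 1)).neg.const_mul 2)).sub
      ((hasDerivAt_sin_lin (lam + 3) ω₂ θ).const_mul (lam + 3)).neg).const_mul K
  refine ⟨?_, ?_, ?_⟩
  · intro θ
    rw [hderiv, (hD2 θ).deriv, ha₁, hK]
    ring
  · rw [hderiv, hg]
    simp
  · rw [ha₁]
    have hω' : ω₁ + ω₂ = ω := hω.symm
    have hlamω : lam * ω = -(π / 2) := by rw [hlam]; field_simp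
    have h1 : Real.cos ((lam - 1) * ω) = -Real.sin ω := by
      have : (lam - 1) * ω = -(π / 2 + ω) := by rw [sub_mul]; rw [one_mul]; linarith [hlamω]
      rw [this, Real.cos_neg]; simp [Real.cos_add]
    have h2 : Real.cos ((lam + 1) * ω) = Real.sin ω := by
      have : (lam + 1) * ω = -(π / 2 - ω) := by rw [add_mul, one_mul]; linarith [hlamω]
      rw [this, Real.cos_neg, Real.cos_pi_div_two_sub]
    have h3 : Real.cos ((lam + 3) * ω) = Real.sin (3 * ω) := by
      have : (lam + 3) * ω = -(π / 2 - 3 * ω) := by rw [add_mul]; linarith [hlamω]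
      rw [this, Real.cos_neg, Real.cos_pi_div_two_sub]
    have hinner : A * (-Real.sin ω) + 2 * Real.sin ω - Real.sin (3 * ω) = 0 := by
      rw [hA]; field_simp; ring
    simp only [hω', h1, h2, h3]
    linear_combination K * hinner
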